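/- Let M ≥ N ≥ 1 be integers and a > −1 a real number. Define φ_{2N−2}(x) = Σ_{k=0}^{N−1} ( ∏_{i=1}^{k} (2i−1)/(2i+2(M−N)) ) · L_{2k}^{(2(M−N))}(2Mx) and φ_{2N−1}(x) = exp((a/(1+a))·2Mx) − (1+a)^{2(M−N)+1} · Σ_{j=0}^{2N−2} (−a)^j · L_j^{(2(M−N))}(2Mx). Then ⟨φ_{2N−2}, φ_{2N−1}⟩_4 = ((1+a)/(2M))^{2(M−N)+1} · a^{2N−1} · ((2M−1)!/(2N−2)!) · ∏_{k=1}^{N−1} (2k−1)/(2k+2(M−N)). -/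

import Mathlib

open MeasureTheory Finset Polynomial

/-- The generalized Laguerre polynomial
`L_n^(α)(x) = ∑_{k=0}^{n} (-1)^k (n+α choose n-k) x^k / k!`. -/
noncomputable def genLaguerre (n α : ℕ) (x : ℝ) : ℝ :=
  ∑ k ∈ Finset.range (n + 1),
    (-1 : ℝ) ^ k * ((n + α).choose (n - k) : ℝ) * x ^ k / (k.factorial : ℝ)

/-- The skew inner product
`⟨f, g⟩₄ = ∫_0^∞ (f(x) g'(x) - f'(x) g(x)) x^(2(M-N)+1) e^(-2Mx) dx`. -/
noncomputable def skewInner (M N : ℕ) (f g : ℝ → ℝ) : ℝ :=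
  ∫ x in Set.Ioi (0 : ℝ),
    (f x * deriv g x - deriv f x * g x) * x ^ (2 * (M - N) + 1) *
      Real.exp (-(2 * (M : ℝ)) * x)


lemma tri_choose {n β k : ℕ} (hk : k ≤ n) :
    (((n+β).choose (n-k) : ℝ)) * ((β+k).choose k) = ((n+β).choose n) * (n.choose k) := by
  rw [Nat.cast_choose ℝ (by omega : n - k ≤ n + β),
      Nat.cast_choose ℝ (by omega : k ≤ β + k),
      Nat.cast_choose ℝ (by omega : n ≤ n + β),
      Nat.cast_choose ℝ hk,
      show n + β - (n - k) = β + k by omega,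
      show β + k - k = β by omega,
      show n + β - n = β by omega]
  have h1 : ((n-k).factorial : ℝ) ≠ 0 := Nat.cast_ne_zero.2 (Nat.factorial_ne_zero _)
  have h2 : ((β+k).factorial : ℝ) ≠ 0 := Nat.cast_ne_zero.2 (Nat.factorial_ne_zero _)
  have h3 : (k.factorial : ℝ) ≠ 0 := Nat.cast_ne_zero.2 (Nat.factorial_ne_zero _)
  have h4 : (β.factorial : ℝ) ≠ 0 := Nat.cast_ne_zero.2 (Nat.factorial_ne_zero _)
  have h5 : (n.factorial : ℝ) ≠ 0 := Nat.cast_ne_zero.2 (Nat.factorial_ne_zero _)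
  field_simp

lemma alt_choose_real (n : ℕ) :
    ∑ k ∈ range (n+1), (-1:ℝ)^k * (n.choose k) = if n = 0 then 1 else 0 := by
  have h : ∑ k ∈ range (n+1), (-1:ℝ)^k * (n.choose k)
      = ((∑ i ∈ range (n + 1), (-1:ℤ) ^ i * (n.choose i) : ℤ) : ℝ) := by
    push_cast; rfl
  rw [h, Int.alternating_sum_range_choose]
  split <;> simp

lemma Gsum : ∀ (j n β : ℕ), ∑ k ∈ range (n+1),
    (-1:ℝ)^k * ((n+β).choose (n-k)) * ((β+j+k).choose k) = (-1:ℝ)^n * (j.choose n) := by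
  intro j
  induction j with
  | zero =>
    intro n β
    have key : ∀ k ∈ range (n+1), (-1:ℝ)^k * ((n+β).choose (n-k)) * ((β+0+k).choose k)
        = ((n+β).choose n : ℝ) * ((-1)^k * (n.choose k)) := by
      intro k hk
      rw [mem_range] at hk
      have h := tri_choose (n := n) (β := β) (k := k) (by omega)
      rw [show β + 0 + k = β + k by ring]
      linear_combination ((-1:ℝ)^k) * h
    rw [Finset.sum_congr rfl key, ← Finset.mul_sum, alt_choose_real]
    rcases Nat.eq_zero_or_pos n with h | h
    · subst h; simp
    · rw [if_neg (by omega), Nat.choose_eq_zero_of_lt h]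
      simp
  | succ j ih =>
    intro n β
    match n with
    | 0 => simp
    | Nat.succ n =>
      simp only [Nat.succ_eq_add_one]
      have e1 : ∑ k ∈ range (n+1+1), (-1:ℝ)^k * ((n+1+β).choose (n+1-k)) * ((β+(j+1)+k).choose k)
          = (∑ i ∈ range (n+1), (-1:ℝ)^(i+1) * ((n+1+β).choose (n+1-(i+1))) * ((β+(j+1)+(i+1)).choose (i+1)))
            + (-1:ℝ)^0 * ((n+1+β).choose (n+1-0)) * ((β+(j+1)+0).choose 0) :=
        Finset.sum_range_succ' _ _
      have e2 : ∀ i ∈ range (n+1),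
          (-1:ℝ)^(i+1) * ((n+1+β).choose (n+1-(i+1))) * ((β+(j+1)+(i+1)).choose (i+1))
          = ((-1:ℝ)^(i+1) * ((n+1+β).choose (n+1-(i+1))) * ((β+j+(i+1)).choose (i+1)))
            - (-1:ℝ)^i * ((n+(β+1)).choose (n-i)) * (((β+1)+j+i).choose i) := by
        intro i hi
        have hp : (β+(j+1)+(i+1)).choose (i+1)
            = (β+j+i+1).choose i + (β+j+i+1).choose (i+1) := by
          rw [show β+(j+1)+(i+1) = (β+j+i+1) + 1 by ring]
          exact Nat.choose_succ_succ _ _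
        have c1 : (((n+(β+1)).choose (n-i)) : ℝ) = ((n+1+β).choose (n-i) : ℝ) := by
          rw [show n+(β+1) = n+1+β by ring]
        have c2 : ((((β+1)+j+i).choose i) : ℝ) = ((β+j+i+1).choose i : ℝ) := by
          rw [show (β+1)+j+i = β+j+i+1 by ring]
        have c3 : (((β+j+(i+1)).choose (i+1)) : ℝ) = ((β+j+i+1).choose (i+1) : ℝ) := by
          rw [show β+j+(i+1) = β+j+i+1 by ring]
        rw [hp, c1, c2, c3]
        push_cast
        ring
      have e3 : ∑ k ∈ range (n+1+1), (-1:ℝ)^k * ((n+1+β).choose (n+1-k)) * ((β+(j+1)+k).choose k)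
          = (∑ k ∈ range (n+1+1), (-1:ℝ)^k * ((n+1+β).choose (n+1-k)) * ((β+j+k).choose k))
            - ∑ i ∈ range (n+1), (-1:ℝ)^i * ((n+(β+1)).choose (n-i)) * (((β+1)+j+i).choose i) := by
        rw [e1, Finset.sum_congr rfl e2, Finset.sum_sub_distrib]
        have e4 : ∑ k ∈ range (n+1+1), (-1:ℝ)^k * ((n+1+β).choose (n+1-k)) * ((β+j+k).choose k)
            = (∑ i ∈ range (n+1), (-1:ℝ)^(i+1) * ((n+1+β).choose (n+1-(i+1))) * ((β+j+(i+1)).choose (i+1)))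
              + (-1:ℝ)^0 * ((n+1+β).choose (n+1-0)) * ((β+j+0).choose 0) :=
          Finset.sum_range_succ' _ _
        rw [e4]
        simp only [Nat.choose_zero_right, pow_zero, Nat.cast_one]
        ring
      rw [e3, ih (n+1) β, ih n (β+1),
        show (j+1).choose (n+1) = j.choose n + j.choose (n+1) from Nat.choose_succ_succ _ _]
      push_cast
      ring

lemma fact_div_fact (c k : ℕ) :
    ((c+k).factorial : ℝ) / k.factorial = ((c+k).choose k) * c.factorial := by
  have h := Nat.choose_mul_factorial_mul_factorial (show k ≤ c + k by omega)
  rw [show c + k - k = c by omega] at h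
  have h2 : (((c+k).choose k : ℝ)) * k.factorial * c.factorial = (c+k).factorial := by
    exact_mod_cast h
  have h3 : (k.factorial : ℝ) ≠ 0 := Nat.cast_ne_zero.2 (Nat.factorial_ne_zero _)
  field_simp
  linarith [h2]

lemma moment (n β j : ℕ) :
    ∑ k ∈ range (n+1), (-1:ℝ)^k * ((n+β).choose (n-k)) * ((β+j+k).factorial / k.factorial)
    = (-1:ℝ)^n * (j.choose n) * (β+j).factorial := by
  have key : ∀ k ∈ range (n+1),
      (-1:ℝ)^k * ((n+β).choose (n-k)) * ((β+j+k).factorial / k.factorial)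
      = ((-1:ℝ)^k * ((n+β).choose (n-k)) * ((β+j+k).choose k)) * (β+j).factorial := by
    intro k hk
    rw [fact_div_fact (β+j) k]
    ring
  rw [Finset.sum_congr rfl key, ← Finset.sum_mul, Gsum j n β]

lemma lap_choose {n β k : ℕ} (hk : k ≤ n) :
    (((n+β).choose (n-k)) : ℝ) * ((β+k).factorial / k.factorial)
    = ((n+β).factorial / n.factorial) * (n.choose k) := by
  rw [Nat.cast_choose ℝ (by omega : n - k ≤ n + β), Nat.cast_choose ℝ hk,
      show n + β - (n - k) = β + k by omega]
  have h1 : ((n-k).factorial : ℝ) ≠ 0 := Nat.cast_ne_zero.2 (Nat.factorial_ne_zero _)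
  have h2 : ((β+k).factorial : ℝ) ≠ 0 := Nat.cast_ne_zero.2 (Nat.factorial_ne_zero _)
  have h3 : (k.factorial : ℝ) ≠ 0 := Nat.cast_ne_zero.2 (Nat.factorial_ne_zero _)
  have h5 : (n.factorial : ℝ) ≠ 0 := Nat.cast_ne_zero.2 (Nat.factorial_ne_zero _)
  field_simp

lemma lap (n β : ℕ) (t : ℝ) :
    ∑ k ∈ range (n+1), (-1:ℝ)^k * ((n+β).choose (n-k)) * ((β+k).factorial / k.factorial) * t^k
    = ((n+β).factorial / n.factorial) * (1-t)^n := by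
  rw [show (1:ℝ)-t = -t+1 by ring, add_pow, Finset.mul_sum]
  refine Finset.sum_congr rfl (fun k hk => ?_)
  rw [mem_range] at hk
  rw [neg_pow, one_pow]
  linear_combination ((-1:ℝ)^k * t^k) * lap_choose (show k ≤ n by omega) (β := β)

lemma choose_fact_div {α n k : ℕ} (h : n ≤ k) :
    ((k.choose n) : ℝ) * ((α+1+k).factorial / k.factorial)
    = (((α+1+k).choose (k-n)) : ℝ) * ((α+1+n).factorial / n.factorial) := by
  rw [Nat.cast_choose ℝ h, Nat.cast_choose ℝ (show k - n ≤ α+1+k by omega),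
      show α+1+k - (k-n) = α+1+n by omega]
  have h1 : ((k-n).factorial : ℝ) ≠ 0 := Nat.cast_ne_zero.2 (Nat.factorial_ne_zero _)
  have h2 : ((α+1+n).factorial : ℝ) ≠ 0 := Nat.cast_ne_zero.2 (Nat.factorial_ne_zero _)
  have h3 : (k.factorial : ℝ) ≠ 0 := Nat.cast_ne_zero.2 (Nat.factorial_ne_zero _)
  have h4 : (n.factorial : ℝ) ≠ 0 := Nat.cast_ne_zero.2 (Nat.factorial_ne_zero _)
  field_simp

lemma mixed (m n α : ℕ) :
    ∑ k ∈ range (m+1), ∑ l ∈ range (n+1),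
      (-1:ℝ)^(k+l) * ((m+α).choose (m-k)) * ((n+α+1).choose (n-l))
        * ((α+1+k+l).factorial / (k.factorial * l.factorial))
    = ((n+α+1).factorial / n.factorial)
        * ((if m = n then (1:ℝ) else 0) - (if m = n+1 then 1 else 0)) := by
  have inner : ∀ k ∈ range (m+1),
      ∑ l ∈ range (n+1), (-1:ℝ)^(k+l) * ((m+α).choose (m-k)) * ((n+α+1).choose (n-l))
        * ((α+1+k+l).factorial / (k.factorial * l.factorial))
      = (if n ≤ k then (-1:ℝ)^k * ((m+α).choose (m-k)) * (((α+1+k).choose (k-n)) : ℝ)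
            * ((α+1+n).factorial / n.factorial) * ((-1:ℝ)^n) else 0) := by
    intro k hk
    have e : ∀ l ∈ range (n+1),
        (-1:ℝ)^(k+l) * ((m+α).choose (m-k)) * ((n+α+1).choose (n-l))
          * ((α+1+k+l).factorial / (k.factorial * l.factorial))
        = ((-1:ℝ)^k * ((m+α).choose (m-k)) / k.factorial)
          * ((-1:ℝ)^l * ((n+(α+1)).choose (n-l)) * (((α+1)+k+l).factorial / l.factorial)) := by
      intro l hl
      rw [pow_add]
      rw [show n+(α+1) = n+α+1 by ring, show (α+1)+k+l = α+1+k+l by ring]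
      have hkf : (k.factorial : ℝ) ≠ 0 := Nat.cast_ne_zero.2 (Nat.factorial_ne_zero _)
      have hlf : (l.factorial : ℝ) ≠ 0 := Nat.cast_ne_zero.2 (Nat.factorial_ne_zero _)
      ring
    rw [Finset.sum_congr rfl e, ← Finset.mul_sum, moment n (α+1) k,
        show (α+1)+k = α+1+k by ring]
    by_cases h : n ≤ k
    · rw [if_pos h]
      linear_combination ((-1:ℝ)^k * (((m+α).choose (m-k)) : ℝ) * (-1:ℝ)^n)
        * choose_fact_div (α := α) h
    · rw [if_neg h, Nat.choose_eq_zero_of_lt (by omega : k < n)]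
      simp
  rw [Finset.sum_congr rfl inner]
  by_cases hmn : n ≤ m
  · rw [range_eq_Ico, ← Finset.sum_Ico_consecutive _ (Nat.zero_le n) (by omega : n ≤ m+1)]
    have h1 : ∑ k ∈ Ico 0 n, (if n ≤ k then (-1:ℝ)^k * ((m+α).choose (m-k))
        * (((α+1+k).choose (k-n)) : ℝ) * ((α+1+n).factorial / n.factorial) * ((-1:ℝ)^n) else 0)
        = 0 := by
      refine Finset.sum_eq_zero (fun k hk => ?_)
      rw [mem_Ico] at hk
      rw [if_neg (by omega)]
    rw [h1, zero_add, Finset.sum_Ico_eq_sum_range]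
    have h2 : ∀ t ∈ range (m+1-n),
        (if n ≤ n+t then (-1:ℝ)^(n+t) * ((m+α).choose (m-(n+t)))
          * (((α+1+(n+t)).choose ((n+t)-n)) : ℝ) * ((α+1+n).factorial / n.factorial)
          * ((-1:ℝ)^n) else 0)
        = ((α+1+n).factorial / n.factorial) *
            ((-1:ℝ)^t * (((m-n)+(α+n)).choose ((m-n)-t)) * (((α+n)+1+t).choose t)) := by
      intro t ht
      rw [if_pos (by omega),
          show m-(n+t) = (m-n)-t by omega,
          show m+α = (m-n)+(α+n) by omega,
          show α+1+(n+t) = (α+n)+1+t by omega,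
          show (n+t)-n = t by omega]
      have hs : (-1:ℝ)^(n+t) * (-1:ℝ)^n = (-1:ℝ)^t := by
        rw [← pow_add, show n+t+n = 2*n+t by ring, pow_add, pow_mul]
        norm_num
      linear_combination (((((m-n)+(α+n)).choose ((m-n)-t)) : ℝ)
        * ((((α+n)+1+t).choose t) : ℝ) * ((α+1+n).factorial / n.factorial : ℝ)) * hs
    rw [show m+1-n = (m-n)+1 by omega] at *
    rw [Finset.sum_congr rfl h2, ← Finset.mul_sum, Gsum 1 (m-n) (α+n)]
    rw [show α+1+n = n+α+1 by ring]
    by_cases e1 : m = n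
    · subst e1
      simp
    · by_cases e2 : m = n+1
      · subst e2
        rw [if_neg (by omega), if_pos rfl]
        norm_num [show n+1-n = 1 by omega]
      · rw [if_neg e1, if_neg e2, Nat.choose_eq_zero_of_lt (by omega : 1 < m-n)]
        simp
  · have h1 : ∑ k ∈ range (m+1), (if n ≤ k then (-1:ℝ)^k * ((m+α).choose (m-k))
        * (((α+1+k).choose (k-n)) : ℝ) * ((α+1+n).factorial / n.factorial) * ((-1:ℝ)^n) else 0)
        = 0 := by
      refine Finset.sum_eq_zero (fun k hk => ?_)
      rw [mem_range] at hk
      rw [if_neg (by omega)]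
    rw [h1, if_neg (by omega), if_neg (by omega)]
    simp

lemma integrableOn_pow_mul_exp {b : ℝ} (hb : 0 < b) (n : ℕ) :
    IntegrableOn (fun x : ℝ => x ^ n * Real.exp (-b * x)) (Set.Ioi 0) := by
  have h0 := Real.GammaIntegral_convergent (s := (n + 1 : ℝ)) (by positivity)
  have h1 : IntegrableOn (fun x : ℝ => Real.exp (-x) * x ^ ((n:ℝ) + 1 - 1)) (Set.Ioi 0) := h0
  have h2 := (integrableOn_Ioi_comp_mul_left_iff
      (fun x : ℝ => Real.exp (-x) * x ^ ((n:ℝ) + 1 - 1)) 0 hb).mpr (by simpa using h1)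
  have h3 : IntegrableOn
      (fun x : ℝ => (b ^ n)⁻¹ * (Real.exp (-(b * x)) * (b * x) ^ ((n:ℝ) + 1 - 1)))
      (Set.Ioi 0) := h2.const_mul _
  apply IntegrableOn.congr_fun h3 ?_ measurableSet_Ioi
  intro x hx
  have hx0 : (0:ℝ) < x := hx
  have hh : ((n:ℝ) + 1 - 1) = (n : ℝ) := by ring
  simp only [hh]
  rw [Real.rpow_natCast, mul_pow]
  have hbn : (b:ℝ) ^ n ≠ 0 := by positivity
  field_simp

lemma integral_pow_mul_exp {b : ℝ} (hb : 0 < b) (n : ℕ) :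
    ∫ x in Set.Ioi (0:ℝ), x ^ n * Real.exp (-b * x) = n.factorial / b ^ (n+1) := by
  have h := Real.integral_rpow_mul_exp_neg_mul_Ioi (a := (n+1 : ℝ)) (r := b) (by positivity) hb
  have heq : ∫ t in Set.Ioi (0:ℝ), t ^ ((n:ℝ) + 1 - 1) * Real.exp (-(b * t))
      = ∫ x in Set.Ioi (0:ℝ), x ^ n * Real.exp (-b * x) := by
    refine setIntegral_congr_fun measurableSet_Ioi (fun x hx => ?_)
    have hx0 : (0:ℝ) < x := hx
    have hh : ((n:ℝ) + 1 - 1) = (n : ℝ) := by ring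
    rw [hh, Real.rpow_natCast, neg_mul]
  rw [heq] at h
  rw [h]
  rw [show ((n:ℝ)+1) = ((n+1 : ℕ) : ℝ) by push_cast; ring, Real.rpow_natCast]
  rw [show ((n+1 : ℕ) : ℝ) = (n:ℝ)+1 by push_cast; ring, Real.Gamma_nat_eq_factorial]
  rw [div_pow, one_pow, div_mul_eq_mul_div, one_mul]

noncomputable def lagS (n β : ℕ) (s : ℝ) : Polynomial ℝ :=
  ∑ k ∈ range (n+1),
    Polynomial.C ((-1:ℝ)^k * ((n+β).choose (n-k)) * s^k / k.factorial) * Polynomial.X^k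

lemma lagS_eval (n β : ℕ) (s x : ℝ) : (lagS n β s).eval x = genLaguerre n β (s*x) := by
  unfold lagS genLaguerre
  rw [Polynomial.eval_finset_sum]
  refine Finset.sum_congr rfl (fun k hk => ?_)
  simp only [eval_mul, eval_C, eval_pow, eval_X]
  rw [mul_pow]
  ring

lemma lagS_zero (β : ℕ) (s : ℝ) : lagS 0 β s = 1 := by
  simp [lagS]

lemma lagS_deriv_zero (β : ℕ) (s : ℝ) : (lagS 0 β s).derivative = 0 := by
  rw [lagS_zero]; simp

lemma lagS_derivative (n β : ℕ) (s : ℝ) :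
    (lagS (n+1) β s).derivative = Polynomial.C (-s) * lagS n (β+1) s := by
  unfold lagS
  rw [derivative_sum]
  rw [Finset.mul_sum]
  rw [Finset.sum_range_succ']
  have h0 : derivative (Polynomial.C ((-1:ℝ)^0 * ((n+1+β).choose (n+1-0)) * s^0 / Nat.factorial 0)
      * Polynomial.X^0) = 0 := by
    simp
  rw [h0, add_zero]
  refine Finset.sum_congr rfl (fun i hi => ?_)
  rw [derivative_C_mul_X_pow]
  rw [show (i+1) - 1 = i by omega]
  rw [← mul_assoc, ← Polynomial.C_mul]
  congr 1
  rw [show n+1-(i+1) = n-i by omega, show n+1+β = n+(β+1) by ring,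
      Nat.factorial_succ]
  have h1 : ((i+1 : ℕ) : ℝ) ≠ 0 := by positivity
  have h2 : (i.factorial : ℝ) ≠ 0 := Nat.cast_ne_zero.2 (Nat.factorial_ne_zero _)
  push_cast
  field_simp
  ring

lemma lagS_shift (n β : ℕ) (s : ℝ) :
    lagS (n+1) β s = lagS (n+1) (β+1) s - lagS n (β+1) s := by
  rw [eq_sub_iff_add_eq]
  unfold lagS
  rw [Finset.sum_range_succ, Finset.sum_range_succ (n := n+1)]
  rw [add_right_comm, ← Finset.sum_add_distrib]
  congr 1
  · refine Finset.sum_congr rfl (fun k hk => ?_)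
    rw [mem_range] at hk
    rw [← add_mul, ← Polynomial.C_add]
    congr 2
    have hp : (n+1+(β+1)).choose (n+1-k) = (n+1+β).choose (n+1-k) + (n+1+β).choose (n-k) := by
      rw [show n+1+(β+1) = (n+1+β)+1 by ring,
          show n+1-k = (n-k)+1 by omega]
      rw [Nat.choose_succ_succ]
      rw [Nat.succ_eq_add_one, show (n-k)+1 = n+1-k by omega]
      exact Nat.add_comm _ _
    rw [show n+(β+1) = n+1+β by ring, hp]
    push_cast
    ring
  · rw [show n+1-(n+1) = 0 by omega]
    norm_num

noncomputable def Phi (w : ℕ) (b : ℝ) (p : Polynomial ℝ) : ℝ :=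
  ∫ x in Set.Ioi (0:ℝ), p.eval x * x^w * Real.exp (-b*x)

lemma Phi_integrable {b : ℝ} (hb : 0 < b) (w : ℕ) (p : Polynomial ℝ) :
    IntegrableOn (fun x => p.eval x * x^w * Real.exp (-b*x)) (Set.Ioi 0) := by
  have h : (fun x => p.eval x * x^w * Real.exp (-b*x))
      = fun x => ∑ i ∈ range (p.natDegree+1), p.coeff i * (x^(i+w) * Real.exp (-b*x)) := by
    funext x
    rw [Polynomial.eval_eq_sum_range, Finset.sum_mul, Finset.sum_mul]
    refine Finset.sum_congr rfl (fun i hi => ?_)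
    rw [pow_add]; ring
  rw [h]
  exact integrable_finset_sum _ (fun i _ => ((integrableOn_pow_mul_exp hb (i+w)).const_mul _))

lemma Phi_sum {b : ℝ} (hb : 0 < b) (w : ℕ) {ι : Type*} (s : Finset ι) (f : ι → Polynomial ℝ) :
    Phi w b (∑ i ∈ s, f i) = ∑ i ∈ s, Phi w b (f i) := by
  unfold Phi
  have h : ∀ x : ℝ, (∑ i ∈ s, f i).eval x * x^w * Real.exp (-b*x)
      = ∑ i ∈ s, (f i).eval x * x^w * Real.exp (-b*x) := by
    intro x
    rw [Polynomial.eval_finset_sum, Finset.sum_mul, Finset.sum_mul]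
  simp_rw [h]
  exact integral_finset_sum s (fun i _ => Phi_integrable hb w (f i))

lemma Phi_Cmul (w : ℕ) (b r : ℝ) (p : Polynomial ℝ) :
    Phi w b (Polynomial.C r * p) = r * Phi w b p := by
  unfold Phi
  have h : ∀ x : ℝ, (Polynomial.C r * p).eval x * x^w * Real.exp (-b*x)
      = r * (p.eval x * x^w * Real.exp (-b*x)) := by
    intro x; simp only [Polynomial.eval_mul, Polynomial.eval_C]; ring
  simp_rw [h]
  rw [← smul_eq_mul, ← integral_smul]
  simp_rw [smul_eq_mul]

lemma Phi_sub {b : ℝ} (hb : 0 < b) (w : ℕ) (p q : Polynomial ℝ) :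
    Phi w b (p - q) = Phi w b p - Phi w b q := by
  unfold Phi
  have h : ∀ x : ℝ, (p - q).eval x * x^w * Real.exp (-b*x)
      = p.eval x * x^w * Real.exp (-b*x) - q.eval x * x^w * Real.exp (-b*x) := by
    intro x; simp only [Polynomial.eval_sub]; ring
  simp_rw [h]
  exact integral_sub (Phi_integrable hb w p) (Phi_integrable hb w q)

lemma Phi_zero (w : ℕ) (b : ℝ) : Phi w b 0 = 0 := by
  unfold Phi; simp

lemma Phi_CXpow {b : ℝ} (hb : 0 < b) (w k : ℕ) (r : ℝ) :
    Phi w b (Polynomial.C r * Polynomial.X^k) = r * ((k+w).factorial / b^(k+w+1)) := by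
  rw [Phi_Cmul]
  congr 1
  unfold Phi
  have h : ∀ x : ℝ, (Polynomial.X^k : Polynomial ℝ).eval x * x^w * Real.exp (-b*x)
      = x^(k+w) * Real.exp (-b*x) := by
    intro x; simp only [Polynomial.eval_pow, Polynomial.eval_X]; rw [pow_add]
  simp_rw [h]
  exact integral_pow_mul_exp hb (k+w)

lemma Phi_lag {b : ℝ} (hb : 0 < b) (w n α : ℕ) (s : ℝ) :
    Phi w b (lagS n α s) = ∑ k ∈ range (n+1),
      ((-1:ℝ)^k * ((n+α).choose (n-k)) * s^k / k.factorial) * ((k+w).factorial / b^(k+w+1)) := by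
  unfold lagS
  rw [Phi_sum hb]
  exact Finset.sum_congr rfl (fun k _ => Phi_CXpow hb w k _)

lemma Phi_lag_mul {b : ℝ} (hb : 0 < b) (w m n α₁ α₂ : ℕ) (s : ℝ) :
    Phi w b (lagS m α₁ s * lagS n α₂ s) = ∑ k ∈ range (m+1), ∑ l ∈ range (n+1),
      ((-1:ℝ)^k * ((m+α₁).choose (m-k)) * s^k / k.factorial)
      * ((-1:ℝ)^l * ((n+α₂).choose (n-l)) * s^l / l.factorial)
      * ((k+l+w).factorial / b^(k+l+w+1)) := by
  unfold lagS
  rw [Finset.sum_mul_sum]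
  rw [Phi_sum hb]
  refine Finset.sum_congr rfl (fun k _ => ?_)
  rw [Phi_sum hb]
  refine Finset.sum_congr rfl (fun l _ => ?_)
  rw [mul_mul_mul_comm, ← Polynomial.C_mul, ← pow_add, Phi_CXpow hb]

lemma Tht (A m n : ℕ) {s : ℝ} (hs : 0 < s) :
    Phi (A+1) s (lagS m A s * lagS n (A+1) s)
    = ((n+A+1).factorial / n.factorial)
        * ((if m = n then (1:ℝ) else 0) - (if m = n+1 then 1 else 0)) / s^(A+2) := by
  rw [Phi_lag_mul hs]
  have key : ∀ k ∈ range (m+1), ∀ l ∈ range (n+1),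
      ((-1:ℝ)^k * ((m+A).choose (m-k)) * s^k / k.factorial)
      * ((-1:ℝ)^l * ((n+(A+1)).choose (n-l)) * s^l / l.factorial)
      * ((k+l+(A+1)).factorial / s^(k+l+(A+1)+1))
      = ((-1:ℝ)^(k+l) * ((m+A).choose (m-k)) * ((n+A+1).choose (n-l))
          * ((A+1+k+l).factorial / (k.factorial * l.factorial))) / s^(A+2) := by
    intro k _ l _
    rw [show k+l+(A+1)+1 = (A+2)+(k+l) by ring, pow_add s,
        show k+l+(A+1) = A+1+k+l by ring, show n+(A+1) = n+A+1 by ring, pow_add (-1:ℝ)]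
    have h1 : (k.factorial : ℝ) ≠ 0 := Nat.cast_ne_zero.2 (Nat.factorial_ne_zero _)
    have h2 : (l.factorial : ℝ) ≠ 0 := Nat.cast_ne_zero.2 (Nat.factorial_ne_zero _)
    have h3 : s ≠ 0 := ne_of_gt hs
    field_simp
    ring
  rw [Finset.sum_congr rfl (fun k hk => Finset.sum_congr rfl (key k hk))]
  simp_rw [← Finset.sum_div]
  rw [mixed m n A]

lemma Lam (A n : ℕ) {s a : ℝ} (hs : 0 < s) (ha : 0 < 1+a) :
    Phi (A+1) (s/(1+a)) (lagS n (A+1) s)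
    = (1+a)^(A+2)/s^(A+2) * ((n+A+1).factorial / n.factorial) * (-a)^n := by
  rw [Phi_lag (by positivity)]
  have key : ∀ k ∈ range (n+1),
      ((-1:ℝ)^k * ((n+(A+1)).choose (n-k)) * s^k / k.factorial)
        * ((k+(A+1)).factorial / (s/(1+a))^(k+(A+1)+1))
      = ((1+a)^(A+2)/s^(A+2))
        * ((-1:ℝ)^k * ((n+(A+1)).choose (n-k)) * (((A+1)+k).factorial / k.factorial) * (1+a)^k) := by
    intro k _
    rw [div_pow, show k+(A+1)+1 = (A+2)+k by ring, pow_add s, pow_add (1+a),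
        show k+(A+1) = (A+1)+k by ring]
    have h1 : (k.factorial : ℝ) ≠ 0 := Nat.cast_ne_zero.2 (Nat.factorial_ne_zero _)
    have h3 : s ≠ 0 := ne_of_gt hs
    have h4 : (1+a) ≠ 0 := ne_of_gt ha
    field_simp
  rw [Finset.sum_congr rfl key, ← Finset.mul_sum, lap n (A+1) (1+a),
      show (1:ℝ)-(1+a) = -a by ring, show n+(A+1) = n+A+1 by ring]
  ring

lemma keyId (M N : ℕ) (hMN : N ≤ M) (k : ℕ) :
    (∏ i ∈ Finset.Icc 1 (k+1), (2*(i:ℝ)-1)/(2*(i:ℝ)+2*((M:ℝ)-(N:ℝ))))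
      * (((2*k+1+(2*(M-N))+1).factorial : ℝ) / (2*k+1).factorial)
    = (∏ i ∈ Finset.Icc 1 k, (2*(i:ℝ)-1)/(2*(i:ℝ)+2*((M:ℝ)-(N:ℝ))))
      * (((2*k+(2*(M-N))+1).factorial : ℝ) / (2*k).factorial) := by
  rw [Finset.prod_Icc_succ_top (by omega : 1 ≤ k+1)]
  have hA : ((2*(M-N) : ℕ) : ℝ) = 2*((M:ℝ)-(N:ℝ)) := by
    push_cast [Nat.cast_sub hMN]
    ring
  have hf1 : ((2*k+1+(2*(M-N))+1).factorial : ℝ)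
      = ((2*k+(2*(M-N))+2 : ℕ) : ℝ) * ((2*k+(2*(M-N))+1).factorial : ℝ) := by
    rw [show 2*k+1+(2*(M-N))+1 = (2*k+(2*(M-N))+1)+1 by ring, Nat.factorial_succ]
    push_cast
    ring
  have hf2 : ((2*k+1).factorial : ℝ) = (2*(k:ℝ)+1) * ((2*k).factorial : ℝ) := by
    rw [show 2*k+1 = (2*k)+1 from rfl, Nat.factorial_succ]
    push_cast
    ring
  have h1 : ((2*k).factorial : ℝ) ≠ 0 := Nat.cast_ne_zero.2 (Nat.factorial_ne_zero _)
  have h2 : (2*(k:ℝ)+1) ≠ 0 := by positivity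
  have h3 : (0:ℝ) ≤ (M:ℝ)-(N:ℝ) := by
    have := (Nat.cast_le (α := ℝ)).2 hMN
    linarith
  have h4 : 2*((k:ℝ)+1)+2*((M:ℝ)-(N:ℝ)) ≠ 0 := by
    have : (0:ℝ) ≤ (k:ℝ) := Nat.cast_nonneg k
    intro h; nlinarith
  rw [hf1, hf2]
  have hc2 : ((2*k+2*(M-N)+2 : ℕ):ℝ) = 2*((k:ℝ)+1)+2*((M:ℝ)-(N:ℝ)) := by
    push_cast [Nat.cast_sub hMN]
    ring
  have h5 : 2*(((k+1:ℕ)):ℝ)-1 = 2*(k:ℝ)+1 := by push_cast; ring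
  have h6 : 2*(((k+1:ℕ)):ℝ)+2*((M:ℝ)-(N:ℝ)) = 2*((k:ℝ)+1)+2*((M:ℝ)-(N:ℝ)) := by
    push_cast; ring
  rw [hc2, h5, h6, mul_assoc]
  congr 1
  rw [div_mul_div_comm]
  rw [div_eq_div_iff (by positivity) h1]
  ring

noncomputable def gam (M N k : ℕ) : ℝ :=
  ∏ i ∈ Finset.Icc 1 k, (2*(i:ℝ)-1)/(2*(i:ℝ)+2*((M:ℝ)-(N:ℝ)))
noncomputable def Fpoly (M N : ℕ) : Polynomial ℝ :=
  ∑ k ∈ range N, Polynomial.C (gam M N k) * lagS (2*k) (2*(M-N)) (2*(M:ℝ))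

noncomputable def Qpoly (M N : ℕ) (a : ℝ) : Polynomial ℝ :=
  ∑ j ∈ range (2*N-1), Polynomial.C ((1+a)^(2*(M-N)+1) * (-a)^j) * lagS j (2*(M-N)) (2*(M:ℝ))
noncomputable def uu (M N : ℕ) (a : ℝ) (k : ℕ) : ℝ :=
  gam M N k * (((2*k+(2*(M-N))+1).factorial : ℝ)/((2*k).factorial : ℝ))
    * a^(2*k+1) * ((1+a)^((2*(M-N))+1)/(2*(M:ℝ))^((2*(M-N))+1))


lemma keyId' (M N : ℕ) (hMN : N ≤ M) (k : ℕ) :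
    gam M N (k+1) * (((2*k+1+(2*(M-N))+1).factorial : ℝ) / (2*k+1).factorial)
    = gam M N k * (((2*k+(2*(M-N))+1).factorial : ℝ) / (2*k).factorial) :=
  keyId M N hMN k

lemma EPlem (M N : ℕ) (hN : 1 ≤ N) (hMN : N ≤ M) (a : ℝ) (ha : -1 < a) :
    Phi (2*(M-N)+1) (2*(M:ℝ)/(1+a))
      (Polynomial.C (a/(1+a)*(2*(M:ℝ))) * Fpoly M N - (Fpoly M N).derivative)
    = uu M N a (N-1) := by
  obtain ⟨N', rfl⟩ : ∃ N2, N = N2+1 := ⟨N-1, by omega⟩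
  have hM1 : 1 ≤ M := le_trans hN hMN
  have hMr : (1:ℝ) ≤ (M:ℝ) := by exact_mod_cast hM1
  have ha1 : (0:ℝ) < 1 + a := by linarith
  have hs : (0:ℝ) < 2*(M:ℝ) := by linarith
  have hb : (0:ℝ) < 2*(M:ℝ)/(1+a) := by positivity
  have hsne : (2*(M:ℝ)) ≠ 0 := ne_of_gt hs
  have hane : (1+a) ≠ 0 := ne_of_gt ha1
  have hFd : (Fpoly M (N'+1)).derivative = ∑ k ∈ range (N'+1),
      Polynomial.C (gam M (N'+1) k) * (lagS (2*k) (2*(M-(N'+1))) (2*(M:ℝ))).derivative := by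
    rw [Fpoly, derivative_sum]
    exact Finset.sum_congr rfl (fun k _ => by rw [Polynomial.derivative_C_mul])
  rw [Phi_sub hb, Phi_Cmul, hFd, Phi_sum hb, Fpoly, Phi_sum hb]
  simp_rw [Phi_Cmul]
  rw [Finset.mul_sum, ← Finset.sum_sub_distrib]
  have hterm : ∀ k ∈ range (N'+1),
      (a/(1+a)*(2*(M:ℝ))) * (gam M (N'+1) k * Phi (2*(M-(N'+1))+1) (2*(M:ℝ)/(1+a))
          (lagS (2*k) (2*(M-(N'+1))) (2*(M:ℝ))))
        - gam M (N'+1) k * Phi (2*(M-(N'+1))+1) (2*(M:ℝ)/(1+a))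
            ((lagS (2*k) (2*(M-(N'+1))) (2*(M:ℝ))).derivative)
      = uu M (N'+1) a k - (if k = 0 then 0 else uu M (N'+1) a (k-1)) := by
    intro k _
    match k with
    | 0 =>
      rw [if_pos rfl, show 2*0 = 0 by ring, lagS_deriv_zero, Phi_zero,
          show lagS 0 (2*(M-(N'+1))) (2*(M:ℝ)) = lagS 0 (2*(M-(N'+1))+1) (2*(M:ℝ)) by
            rw [lagS_zero, lagS_zero],
          Lam (2*(M-(N'+1))) 0 hs ha1]
      have hgam0 : gam M (N'+1) 0 = 1 := by
        rw [gam]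
        simp
      rw [hgam0, uu, hgam0]
      rw [show 0+(2*(M-(N'+1)))+1 = 2*0+(2*(M-(N'+1)))+1 by ring,
          show (2*(M-(N'+1)))+2 = ((2*(M-(N'+1)))+1)+1 by ring, pow_succ (2*(M:ℝ)), pow_succ (1+a)]
      field_simp
      ring
    | (k'+1) =>
      rw [if_neg (by omega), show k'+1-1 = k' by omega]
      rw [show 2*(k'+1) = (2*k'+1)+1 by ring, lagS_derivative (2*k'+1) (2*(M-(N'+1))),
          lagS_shift (2*k'+1) (2*(M-(N'+1))), Phi_sub hb, Phi_Cmul,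
          Lam (2*(M-(N'+1))) ((2*k'+1)+1) hs ha1, Lam (2*(M-(N'+1))) (2*k'+1) hs ha1]
      rw [show (2*k'+1)+1+(2*(M-(N'+1)))+1 = 2*(k'+1)+(2*(M-(N'+1)))+1 by ring,
          show ((2*k'+1)+1).factorial = (2*(k'+1)).factorial from by congr 1]
      have hpe : (-a)^((2*k'+1)+1) = a^(2*(k'+1)) := by
        rw [show (2*k'+1)+1 = 2*(k'+1) by ring]
        exact Even.neg_pow (even_two_mul _) a
      have hpo : (-a)^(2*k'+1) = -(a^(2*k'+1)) := Odd.neg_pow ⟨k', by ring⟩ a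
      rw [hpe, hpo, uu, uu]
      have hcK : a/(1+a)*(2*(M:ℝ)) * ((1+a)^((2*(M-(N'+1)))+2)/(2*(M:ℝ))^((2*(M-(N'+1)))+2))
          = a * ((1+a)^((2*(M-(N'+1)))+1)/(2*(M:ℝ))^((2*(M-(N'+1)))+1)) := by
        rw [show (2*(M-(N'+1)))+2 = ((2*(M-(N'+1)))+1)+1 by ring, pow_succ (2*(M:ℝ)),
          pow_succ (1+a)]
        field_simp
      have hSK : (2*(M:ℝ)) * ((1+a)^((2*(M-(N'+1)))+2)/(2*(M:ℝ))^((2*(M-(N'+1)))+2))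
          = (1+a) * ((1+a)^((2*(M-(N'+1)))+1)/(2*(M:ℝ))^((2*(M-(N'+1)))+1)) := by
        rw [show (2*(M-(N'+1)))+2 = ((2*(M-(N'+1)))+1)+1 by ring, pow_succ (2*(M:ℝ)),
          pow_succ (1+a)]
        field_simp
      have hkk := keyId' M (N'+1) hMN k'
      linear_combination
        (gam M (N'+1) (k'+1)
            * ((((2*(k'+1)+(2*(M-(N'+1)))+1).factorial : ℝ))/(((2*(k'+1)).factorial : ℝ)))
            * a^(2*k'+2)
          + gam M (N'+1) (k'+1)
            * ((((2*k'+1+(2*(M-(N'+1)))+1).factorial : ℝ))/(((2*k'+1).factorial : ℝ)))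
            * a^(2*k'+1)) * hcK
        + (-(gam M (N'+1) (k'+1)
            * ((((2*k'+1+(2*(M-(N'+1)))+1).factorial : ℝ))/(((2*k'+1).factorial : ℝ)))
            * a^(2*k'+1))) * hSK
        + (-(a^(2*k'+1)) * ((1+a)^((2*(M-(N'+1)))+1)/(2*(M:ℝ))^((2*(M-(N'+1)))+1))) * hkk
  rw [Finset.sum_congr rfl hterm]
  rw [Finset.sum_range_succ']
  rw [if_pos rfl, sub_zero]
  have hshift : ∀ i ∈ range N',
      uu M (N'+1) a (i+1) - (if i+1 = 0 then (0:ℝ) else uu M (N'+1) a (i+1-1))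
      = uu M (N'+1) a (i+1) - uu M (N'+1) a i := by
    intro i _
    rw [if_neg (by omega), show i+1-1 = i by omega]
  rw [Finset.sum_congr rfl hshift, Finset.sum_range_sub (uu M (N'+1) a) N']
  rw [show N'+1-1 = N' by omega]
  ring

lemma PPlem (M N : ℕ) (hN : 1 ≤ N) (hMN : N ≤ M) (a : ℝ) (ha : -1 < a) :
    Phi (2*(M-N)+1) (2*(M:ℝ))
      ((Fpoly M N).derivative * Qpoly M N a - Fpoly M N * (Qpoly M N a).derivative) = 0 := by
  obtain ⟨N', rfl⟩ : ∃ N2, N = N2+1 := ⟨N-1, by omega⟩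
  have hM1 : 1 ≤ M := le_trans hN hMN
  have hMr : (1:ℝ) ≤ (M:ℝ) := by exact_mod_cast hM1
  have hs : (0:ℝ) < 2*(M:ℝ) := by linarith
  have h2N : 2*(N'+1)-1 = 2*N'+1 := by omega
  have hdel : ∀ (n v : ℕ) (f : ℕ → ℝ),
      (∑ j ∈ range n, if j = v then f j else 0) = if v < n then f v else 0 := by
    intro n v f
    rw [Finset.sum_ite_eq' (range n) v f]
    simp [Finset.mem_range]
  have hFd : (Fpoly M (N'+1)).derivative = ∑ k ∈ range (N'+1),
      Polynomial.C (gam M (N'+1) k) * (lagS (2*k) (2*(M-(N'+1))) (2*(M:ℝ))).derivative := by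
    rw [Fpoly, derivative_sum]
    exact Finset.sum_congr rfl (fun k _ => by rw [Polynomial.derivative_C_mul])
  have hQd : (Qpoly M (N'+1) a).derivative = ∑ j ∈ range (2*N'+1),
      Polynomial.C ((1+a)^(2*(M-(N'+1))+1) * (-a)^j)
        * (lagS j (2*(M-(N'+1))) (2*(M:ℝ))).derivative := by
    rw [Qpoly, derivative_sum, h2N]
    exact Finset.sum_congr rfl (fun j _ => by rw [Polynomial.derivative_C_mul])
  rw [Phi_sub hs]
  have hT1 : Phi (2*(M-(N'+1))+1) (2*(M:ℝ))
      ((Fpoly M (N'+1)).derivative * Qpoly M (N'+1) a)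
      = ∑ k ∈ range N',
          gam M (N'+1) (k+1) * (-(2*(M:ℝ)))
            * (((2*k+1+(2*(M-(N'+1)))+1).factorial : ℝ)/((2*k+1).factorial))
            / (2*(M:ℝ))^((2*(M-(N'+1)))+2)
            * ((1+a)^((2*(M-(N'+1)))+1) * ((-a)^(2*k+1) - (-a)^(2*k+2))) := by
    rw [hFd, Qpoly, h2N, Finset.sum_mul_sum, Phi_sum hs, Finset.sum_range_succ']
    have hzero : ∑ j ∈ range (2*N'+1),
        Phi (2*(M-(N'+1))+1) (2*(M:ℝ))
          ((Polynomial.C (gam M (N'+1) 0) * (lagS (2*0) (2*(M-(N'+1))) (2*(M:ℝ))).derivative)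
            * (Polynomial.C ((1+a)^(2*(M-(N'+1))+1) * (-a)^j)
                * lagS j (2*(M-(N'+1))) (2*(M:ℝ)))) = 0 := by
      refine Finset.sum_eq_zero (fun j _ => ?_)
      rw [show (2:ℕ)*0 = 0 from rfl, lagS_deriv_zero, mul_zero, zero_mul, Phi_zero]
    rw [Phi_sum hs, hzero, add_zero]
    refine Finset.sum_congr rfl (fun k hk => ?_)
    rw [Finset.mem_range] at hk
    rw [Phi_sum hs]
    have hterm : ∀ j ∈ range (2*N'+1),
        Phi (2*(M-(N'+1))+1) (2*(M:ℝ))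
          ((Polynomial.C (gam M (N'+1) (k+1))
              * (lagS (2*(k+1)) (2*(M-(N'+1))) (2*(M:ℝ))).derivative)
            * (Polynomial.C ((1+a)^(2*(M-(N'+1))+1) * (-a)^j)
                * lagS j (2*(M-(N'+1))) (2*(M:ℝ))))
        = (if j = 2*k+1 then gam M (N'+1) (k+1) * (-(2*(M:ℝ)))
              * ((1+a)^(2*(M-(N'+1))+1) * (-a)^j)
              * (((2*k+1+(2*(M-(N'+1)))+1).factorial : ℝ)/((2*k+1).factorial))
              / (2*(M:ℝ))^((2*(M-(N'+1)))+2) else 0)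
          - (if j = 2*k+2 then gam M (N'+1) (k+1) * (-(2*(M:ℝ)))
              * ((1+a)^(2*(M-(N'+1))+1) * (-a)^j)
              * (((2*k+1+(2*(M-(N'+1)))+1).factorial : ℝ)/((2*k+1).factorial))
              / (2*(M:ℝ))^((2*(M-(N'+1)))+2) else 0) := by
      intro j _
      rw [show 2*(k+1) = (2*k+1)+1 by ring, lagS_derivative (2*k+1) (2*(M-(N'+1))),
          show (Polynomial.C (gam M (N'+1) (k+1))
              * (Polynomial.C (-(2*(M:ℝ))) * lagS (2*k+1) (2*(M-(N'+1))+1) (2*(M:ℝ))))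
            * (Polynomial.C ((1+a)^(2*(M-(N'+1))+1) * (-a)^j)
                * lagS j (2*(M-(N'+1))) (2*(M:ℝ)))
            = (Polynomial.C (gam M (N'+1) (k+1)) * Polynomial.C (-(2*(M:ℝ)))
                * Polynomial.C ((1+a)^(2*(M-(N'+1))+1) * (-a)^j))
              * (lagS j (2*(M-(N'+1))) (2*(M:ℝ)) * lagS (2*k+1) (2*(M-(N'+1))+1) (2*(M:ℝ)))
            from by ring,
          ← Polynomial.C_mul, ← Polynomial.C_mul, Phi_Cmul,
          Tht (2*(M-(N'+1))) j (2*k+1) hs]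
      rw [show (2*k+1)+1 = 2*k+2 by ring]
      by_cases h1 : j = 2*k+1
      · rw [if_pos h1, if_pos h1, if_neg (by omega), if_neg (by omega)]
        ring
      · by_cases h2 : j = 2*k+2
        · rw [if_neg h1, if_pos h2, if_neg h1, if_pos h2]
          ring
        · rw [if_neg h1, if_neg h2, if_neg h1, if_neg h2]
          ring
    rw [Finset.sum_congr rfl hterm, Finset.sum_sub_distrib, hdel, hdel,
        if_pos (by omega : 2*k+1 < 2*N'+1), if_pos (by omega : 2*k+2 < 2*N'+1)]
    ring
  have hT2 : Phi (2*(M-(N'+1))+1) (2*(M:ℝ))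
      (Fpoly M (N'+1) * (Qpoly M (N'+1) a).derivative)
      = ∑ k ∈ range (N'+1),
          ((if k < N' then gam M (N'+1) k * (-(2*(M:ℝ)))
              * ((1+a)^(2*(M-(N'+1))+1) * (-a)^(2*k+1))
              * (((2*k+(2*(M-(N'+1)))+1).factorial : ℝ)/((2*k).factorial))
              / (2*(M:ℝ))^((2*(M-(N'+1)))+2) else 0)
           - (if k = 0 then 0 else gam M (N'+1) k * (-(2*(M:ℝ)))
              * ((1+a)^(2*(M-(N'+1))+1) * (-a)^(2*(k-1)+2))
              * (((2*(k-1)+1+(2*(M-(N'+1)))+1).factorial : ℝ)/((2*(k-1)+1).factorial))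
              / (2*(M:ℝ))^((2*(M-(N'+1)))+2))) := by
    rw [Fpoly, hQd, Finset.sum_mul_sum, Phi_sum hs]
    refine Finset.sum_congr rfl (fun k hk => ?_)
    rw [Finset.mem_range] at hk
    rw [Phi_sum hs, Finset.sum_range_succ']
    have hz : Phi (2*(M-(N'+1))+1) (2*(M:ℝ))
        ((Polynomial.C (gam M (N'+1) k) * lagS (2*k) (2*(M-(N'+1))) (2*(M:ℝ)))
          * (Polynomial.C ((1+a)^(2*(M-(N'+1))+1) * (-a)^0)
              * (lagS 0 (2*(M-(N'+1))) (2*(M:ℝ))).derivative)) = 0 := by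
      rw [lagS_deriv_zero, mul_zero, mul_zero, Phi_zero]
    rw [hz, add_zero]
    have hterm : ∀ j ∈ range (2*N'),
        Phi (2*(M-(N'+1))+1) (2*(M:ℝ))
          ((Polynomial.C (gam M (N'+1) k) * lagS (2*k) (2*(M-(N'+1))) (2*(M:ℝ)))
            * (Polynomial.C ((1+a)^(2*(M-(N'+1))+1) * (-a)^(j+1))
                * (lagS (j+1) (2*(M-(N'+1))) (2*(M:ℝ))).derivative))
        = (if j = 2*k then gam M (N'+1) k * (-(2*(M:ℝ)))
              * ((1+a)^(2*(M-(N'+1))+1) * (-a)^(j+1))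
              * (((j+(2*(M-(N'+1)))+1).factorial : ℝ)/(j.factorial))
              / (2*(M:ℝ))^((2*(M-(N'+1)))+2) else 0)
          - (if 2*k = j+1 then gam M (N'+1) k * (-(2*(M:ℝ)))
              * ((1+a)^(2*(M-(N'+1))+1) * (-a)^(j+1))
              * (((j+(2*(M-(N'+1)))+1).factorial : ℝ)/(j.factorial))
              / (2*(M:ℝ))^((2*(M-(N'+1)))+2) else 0) := by
      intro j _
      rw [lagS_derivative j (2*(M-(N'+1))),
          show (Polynomial.C (gam M (N'+1) k) * lagS (2*k) (2*(M-(N'+1))) (2*(M:ℝ)))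
            * (Polynomial.C ((1+a)^(2*(M-(N'+1))+1) * (-a)^(j+1))
                * (Polynomial.C (-(2*(M:ℝ))) * lagS j (2*(M-(N'+1))+1) (2*(M:ℝ))))
            = (Polynomial.C (gam M (N'+1) k) * Polynomial.C (-(2*(M:ℝ)))
                * Polynomial.C ((1+a)^(2*(M-(N'+1))+1) * (-a)^(j+1)))
              * (lagS (2*k) (2*(M-(N'+1))) (2*(M:ℝ)) * lagS j (2*(M-(N'+1))+1) (2*(M:ℝ)))
            from by ring,
          ← Polynomial.C_mul, ← Polynomial.C_mul, Phi_Cmul,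
          Tht (2*(M-(N'+1))) (2*k) j hs]
      by_cases h1 : 2*k = j
      · rw [if_pos h1, if_pos (by omega : j = 2*k), if_neg (by omega), if_neg (by omega)]
        ring
      · by_cases h2 : 2*k = j+1
        · rw [if_neg h1, if_pos h2, if_neg (by omega : ¬ j = 2*k), if_pos h2]
          ring
        · rw [if_neg h1, if_neg h2, if_neg (by omega : ¬ j = 2*k), if_neg h2]
          ring
    rw [Finset.sum_congr rfl hterm, Finset.sum_sub_distrib]
    congr 1
    · rw [hdel]
      by_cases hk0 : k < N'
      · rw [if_pos (by omega : 2*k < 2*N'), if_pos hk0]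
      · rw [if_neg (by omega : ¬ 2*k < 2*N'), if_neg hk0]
    · match k with
      | 0 =>
        rw [if_pos rfl]
        refine Finset.sum_eq_zero (fun j _ => ?_)
        rw [if_neg (by omega)]
      | (k''+1) =>
        rw [if_neg (by omega)]
        have hconv : ∀ j ∈ range (2*N'),
            (if 2*(k''+1) = j+1 then gam M (N'+1) (k''+1) * (-(2*(M:ℝ)))
              * ((1+a)^(2*(M-(N'+1))+1) * (-a)^(j+1))
              * (((j+(2*(M-(N'+1)))+1).factorial : ℝ)/(j.factorial))
              / (2*(M:ℝ))^((2*(M-(N'+1)))+2) else 0)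
            = (if j = 2*k''+1 then gam M (N'+1) (k''+1) * (-(2*(M:ℝ)))
              * ((1+a)^(2*(M-(N'+1))+1) * (-a)^(j+1))
              * (((j+(2*(M-(N'+1)))+1).factorial : ℝ)/(j.factorial))
              / (2*(M:ℝ))^((2*(M-(N'+1)))+2) else 0) := by
          intro j _
          by_cases h : j = 2*k''+1
          · rw [if_pos (by omega), if_pos h]
          · rw [if_neg (by omega), if_neg h]
        rw [Finset.sum_congr rfl hconv, hdel, if_pos (by omega : 2*k''+1 < 2*N')]
        rw [show k''+1-1 = k'' by omega, show (2*k''+1)+1 = 2*k''+2 by ring]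
  rw [hT1, hT2, Finset.sum_sub_distrib]
  have e1 : ∑ k ∈ range (N'+1), (if k < N' then gam M (N'+1) k * (-(2*(M:ℝ)))
              * ((1+a)^(2*(M-(N'+1))+1) * (-a)^(2*k+1))
              * (((2*k+(2*(M-(N'+1)))+1).factorial : ℝ)/((2*k).factorial))
              / (2*(M:ℝ))^((2*(M-(N'+1)))+2) else 0)
      = ∑ k ∈ range N', gam M (N'+1) k * (-(2*(M:ℝ)))
              * ((1+a)^(2*(M-(N'+1))+1) * (-a)^(2*k+1))
              * (((2*k+(2*(M-(N'+1)))+1).factorial : ℝ)/((2*k).factorial))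
              / (2*(M:ℝ))^((2*(M-(N'+1)))+2) := by
    rw [Finset.sum_range_succ, if_neg (by omega), add_zero]
    exact Finset.sum_congr rfl (fun k hk => if_pos (Finset.mem_range.1 hk))
  have e2 : ∑ k ∈ range (N'+1), (if k = 0 then (0:ℝ) else gam M (N'+1) k * (-(2*(M:ℝ)))
              * ((1+a)^(2*(M-(N'+1))+1) * (-a)^(2*(k-1)+2))
              * (((2*(k-1)+1+(2*(M-(N'+1)))+1).factorial : ℝ)/((2*(k-1)+1).factorial))
              / (2*(M:ℝ))^((2*(M-(N'+1)))+2))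
      = ∑ k ∈ range N', gam M (N'+1) (k+1) * (-(2*(M:ℝ)))
              * ((1+a)^(2*(M-(N'+1))+1) * (-a)^(2*k+2))
              * (((2*k+1+(2*(M-(N'+1)))+1).factorial : ℝ)/((2*k+1).factorial))
              / (2*(M:ℝ))^((2*(M-(N'+1)))+2) := by
    rw [Finset.sum_range_succ', if_pos rfl, add_zero]
    refine Finset.sum_congr rfl (fun k hk => ?_)
    rw [if_neg (by omega), show k+1-1 = k by omega]
  rw [e1, e2, ← Finset.sum_sub_distrib, ← Finset.sum_sub_distrib]
  refine Finset.sum_eq_zero (fun k hk => ?_)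
  have hkk := keyId' M (N'+1) hMN k
  linear_combination ((-(2*(M:ℝ)))/(2*(M:ℝ))^((2*(M-(N'+1)))+2)
    * ((1+a)^(2*(M-(N'+1))+1)) * (-a)^(2*k+1)) * hkk

/-- The normalization constant `r_{N-1} = ⟨φ_{2N-2}, φ_{2N-1}⟩₄` of the skew-orthogonal
family in the rank-one quaternionic spiked Wishart model. -/
theorem stmt_17 (M N : ℕ) (hN : 1 ≤ N) (hMN : N ≤ M) (a : ℝ) (ha : -1 < a) :
    skewInner M N
      (fun x => ∑ k ∈ Finset.range N,
        (∏ i ∈ Finset.Icc 1 k,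
            (2 * (i : ℝ) - 1) / (2 * (i : ℝ) + 2 * ((M : ℝ) - (N : ℝ)))) *
          genLaguerre (2 * k) (2 * (M - N)) (2 * (M : ℝ) * x))
      (fun x =>
        Real.exp (a / (1 + a) * (2 * (M : ℝ) * x)) -
          (1 + a) ^ (2 * (M - N) + 1) *
            ∑ j ∈ Finset.range (2 * N - 1),
              (-a) ^ j * genLaguerre j (2 * (M - N)) (2 * (M : ℝ) * x))
      = ((1 + a) / (2 * (M : ℝ))) ^ (2 * (M - N) + 1) * a ^ (2 * N - 1) *
          (((2 * M - 1).factorial : ℝ) / ((2 * N - 2).factorial : ℝ)) *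
          ∏ k ∈ Finset.Icc 1 (N - 1),
            (2 * (k : ℝ) - 1) / (2 * (k : ℝ) + 2 * ((M : ℝ) - (N : ℝ))) := by
  have hM1 : 1 ≤ M := le_trans hN hMN
  have hMr : (1:ℝ) ≤ (M:ℝ) := by exact_mod_cast hM1
  have ha1 : (0:ℝ) < 1 + a := by linarith
  have hs : (0:ℝ) < 2*(M:ℝ) := by linarith
  have hb1 : (0:ℝ) < 2*(M:ℝ)/(1+a) := by positivity
  have hfun : (fun x:ℝ => ∑ k ∈ Finset.range N,
        (∏ i ∈ Finset.Icc 1 k,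
            (2 * (i : ℝ) - 1) / (2 * (i : ℝ) + 2 * ((M : ℝ) - (N : ℝ)))) *
          genLaguerre (2 * k) (2 * (M - N)) (2 * (M : ℝ) * x))
      = fun x => (Fpoly M N).eval x := by
    funext x
    rw [Fpoly, Polynomial.eval_finset_sum]
    refine Finset.sum_congr rfl (fun k _ => ?_)
    rw [Polynomial.eval_mul, Polynomial.eval_C, lagS_eval]
    rw [mul_assoc (2:ℝ)]
    rfl
  have hgfun : (fun x:ℝ => Real.exp (a / (1 + a) * (2 * (M : ℝ) * x)) -
          (1 + a) ^ (2 * (M - N) + 1) *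
            ∑ j ∈ Finset.range (2 * N - 1),
              (-a) ^ j * genLaguerre j (2 * (M - N)) (2 * (M : ℝ) * x))
      = fun x => Real.exp ((a/(1+a)*(2*(M:ℝ)))*x) - (Qpoly M N a).eval x := by
    funext x
    congr 1
    · congr 1
      ring
    · rw [Qpoly, Polynomial.eval_finset_sum, Finset.mul_sum]
      refine Finset.sum_congr rfl (fun j _ => ?_)
      rw [Polynomial.eval_mul, Polynomial.eval_C, lagS_eval, mul_assoc (2:ℝ)]
      ring
  unfold skewInner
  rw [hfun, hgfun]
  have hd2 : ∀ x : ℝ, deriv (fun y => Real.exp ((a/(1+a)*(2*(M:ℝ)))*y) - (Qpoly M N a).eval y) x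
      = (a/(1+a)*(2*(M:ℝ))) * Real.exp ((a/(1+a)*(2*(M:ℝ)))*x) - (Qpoly M N a).derivative.eval x := by
    intro x
    have h0 : HasDerivAt (fun y:ℝ => (a/(1+a)*(2*(M:ℝ)))*y) (a/(1+a)*(2*(M:ℝ))) x := by
      simpa using (hasDerivAt_id x).const_mul (a/(1+a)*(2*(M:ℝ)))
    refine (((h0.exp).sub ((Qpoly M N a).hasDerivAt x)).deriv).trans ?_
    ring
  have key : ∀ x ∈ Set.Ioi (0:ℝ),
      ((fun x => (Fpoly M N).eval x) x
          * deriv (fun y => Real.exp ((a/(1+a)*(2*(M:ℝ)))*y) - (Qpoly M N a).eval y) x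
        - deriv (fun x => (Fpoly M N).eval x) x
          * (fun x => Real.exp ((a/(1+a)*(2*(M:ℝ)))*x) - (Qpoly M N a).eval x) x)
        * x ^ (2*(M-N)+1) * Real.exp (-(2*(M:ℝ))*x)
      = ((Polynomial.C (a/(1+a)*(2*(M:ℝ))) * Fpoly M N - (Fpoly M N).derivative).eval x
            * x^(2*(M-N)+1) * Real.exp (-(2*(M:ℝ)/(1+a))*x))
        + (((Fpoly M N).derivative * Qpoly M N a - Fpoly M N * (Qpoly M N a).derivative).eval x
            * x^(2*(M-N)+1) * Real.exp (-(2*(M:ℝ))*x)) := by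
    intro x _
    have hexp : Real.exp ((a/(1+a)*(2*(M:ℝ)))*x) * Real.exp (-(2*(M:ℝ))*x)
        = Real.exp (-(2*(M:ℝ)/(1+a))*x) := by
      rw [← Real.exp_add]
      congr 1
      field_simp
      ring
    simp only [hd2, Polynomial.deriv, Polynomial.eval_sub, Polynomial.eval_mul,
      Polynomial.eval_C]
    linear_combination (x^(2*(M-N)+1) * ((a/(1+a)*(2*(M:ℝ))) * (Fpoly M N).eval x
      - (Fpoly M N).derivative.eval x)) * hexp
  rw [MeasureTheory.setIntegral_congr_fun measurableSet_Ioi key]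
  rw [MeasureTheory.integral_add (Phi_integrable hb1 (2*(M-N)+1) _)
        (Phi_integrable hs (2*(M-N)+1) _)]
  have e1 : ∫ x in Set.Ioi (0:ℝ),
      (Polynomial.C (a/(1+a)*(2*(M:ℝ))) * Fpoly M N - (Fpoly M N).derivative).eval x
        * x^(2*(M-N)+1) * Real.exp (-(2*(M:ℝ)/(1+a))*x)
      = Phi (2*(M-N)+1) (2*(M:ℝ)/(1+a))
          (Polynomial.C (a/(1+a)*(2*(M:ℝ))) * Fpoly M N - (Fpoly M N).derivative) := rfl
  have e2 : ∫ x in Set.Ioi (0:ℝ),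
      ((Fpoly M N).derivative * Qpoly M N a - Fpoly M N * (Qpoly M N a).derivative).eval x
        * x^(2*(M-N)+1) * Real.exp (-(2*(M:ℝ))*x)
      = Phi (2*(M-N)+1) (2*(M:ℝ))
          ((Fpoly M N).derivative * Qpoly M N a - Fpoly M N * (Qpoly M N a).derivative) := rfl
  rw [e1, e2, PPlem M N hN hMN a ha, EPlem M N hN hMN a ha, add_zero]
  have hg : gam M N (N-1) = ∏ k ∈ Finset.Icc 1 (N - 1),
      (2 * (k : ℝ) - 1) / (2 * (k : ℝ) + 2 * ((M : ℝ) - (N : ℝ))) := rfl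
  rw [uu, hg, show 2*(N-1)+(2*(M-N))+1 = 2*M-1 by omega, show 2*(N-1)+1 = 2*N-1 by omega,
      show 2*(N-1) = 2*N-2 by omega, div_pow]
  ring
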